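/- Let m > n ≥ 1 and let F be an m×m unitary complex matrix, partitioned into row blocks F = [G ; H] where G is n×m and H is (m−n)×m (so that G G^† = I_n, H H^† = I_{m−n}, and G H^† = 0). Then for every n×(m−n) complex matrix M, the spectral norm satisfies ‖M^† G − H‖₂² = 1 + ‖M‖₂². -/

import Mathlib

set_option maxHeartbeats 1000000


open Matrix

noncomputable section

/-- Euclidean (`ℓ²`) norm of a complex vector. -/
def l2norm {ι : Type*} [Fintype ι] (v : ι → ℂ) : ℝ := Real.sqrt (∑ i, ‖v i‖ ^ 2)

/-- Spectral norm (largest singular value) of a complex matrix: the supremum of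
`‖M v‖₂` over the `ℓ²` unit ball. -/
def specNorm {ι κ : Type*} [Fintype ι] [Fintype κ] (M : Matrix ι κ ℂ) : ℝ :=
  sSup {c : ℝ | ∃ v : κ → ℂ, l2norm v ≤ 1 ∧ c = l2norm (M *ᵥ v)}

open scoped Matrix.Norms.L2Operator

section helpers

set_option linter.unusedSectionVars false

variable {ι κ : Type*} [Fintype ι] [Fintype κ] [DecidableEq ι] [DecidableEq κ]

lemma l2norm_eq (v : ι → ℂ) : l2norm v = ‖(WithLp.equiv 2 (ι → ℂ)).symm v‖ := by
  rw [EuclideanSpace.norm_eq]; rfl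

lemma clm_apply (M : Matrix ι κ ℂ) (x : EuclideanSpace ℂ κ) :
    ((Matrix.toEuclideanLin (𝕜 := ℂ) (m := ι) (n := κ)).trans
      LinearMap.toContinuousLinearMap M) x
      = (WithLp.equiv 2 (ι → ℂ)).symm (M *ᵥ (WithLp.equiv 2 (κ → ℂ)) x) := by
  rfl

lemma specNorm_eq (M : Matrix ι κ ℂ) : specNorm M = ‖M‖ := by
  rw [Matrix.l2_opNorm_def, ← ContinuousLinearMap.sSup_unitClosedBall_eq_norm]
  unfold specNorm
  congr 1
  ext c
  simp only [Set.mem_image, Set.mem_setOf_eq, Metric.mem_closedBall, dist_zero_right]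
  constructor
  · rintro ⟨v, hv, rfl⟩
    refine ⟨(WithLp.equiv 2 (κ → ℂ)).symm v, by rwa [← l2norm_eq], ?_⟩
    rw [clm_apply, ← l2norm_eq]
    simp
  · rintro ⟨x, hx, rfl⟩
    refine ⟨(WithLp.equiv 2 (κ → ℂ)) x, ?_, ?_⟩
    · rw [l2norm_eq]; simpa using hx
    · rw [clm_apply, ← l2norm_eq]

lemma norm_sq_eq (B : Matrix ι κ ℂ) : ‖B‖ ^ 2 = ‖B * Bᴴ‖ := by
  have h := Matrix.l2_opNorm_conjTranspose_mul_self Bᴴ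
  rw [conjTranspose_conjTranspose, Matrix.l2_opNorm_conjTranspose] at h
  rw [h]; ring

lemma norm_one_add [Nonempty κ] (M : Matrix ι κ ℂ) :
    ‖Mᴴ * M + 1‖ = ‖M‖ ^ 2 + 1 := by
  set P : Matrix κ κ ℂ := Mᴴ * M + 1 with hP
  -- dot product identity
  have hdot : ∀ w : κ → ℂ, star w ⬝ᵥ (P *ᵥ w)
      = star (M *ᵥ w) ⬝ᵥ (M *ᵥ w) + star w ⬝ᵥ w := by
    intro w
    rw [hP, add_mulVec, one_mulVec, dotProduct_add, star_mulVec,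
      ← Matrix.mulVec_mulVec, dotProduct_mulVec]
  -- the key quadratic form inequality
  have h1 : ∀ v : κ → ℂ,
      ‖(WithLp.equiv 2 (ι → ℂ)).symm (M *ᵥ v)‖ ^ 2
        + ‖(WithLp.equiv 2 (κ → ℂ)).symm v‖ ^ 2
      ≤ ‖P‖ * ‖(WithLp.equiv 2 (κ → ℂ)).symm v‖ ^ 2 := by
    intro v
    have hip : (inner ℂ ((WithLp.equiv 2 (κ → ℂ)).symm v)
        ((WithLp.equiv 2 (κ → ℂ)).symm (P *ᵥ v)) : ℂ) = star v ⬝ᵥ (P *ᵥ v) :=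
      by rw [dotProduct_comm]; rfl
    have e1 : (inner ℂ ((WithLp.equiv 2 (ι → ℂ)).symm (M *ᵥ v))
        ((WithLp.equiv 2 (ι → ℂ)).symm (M *ᵥ v)) : ℂ) = star (M *ᵥ v) ⬝ᵥ (M *ᵥ v) :=
      by rw [dotProduct_comm]; rfl
    have e2 : (inner ℂ ((WithLp.equiv 2 (κ → ℂ)).symm v)
        ((WithLp.equiv 2 (κ → ℂ)).symm v) : ℂ) = star v ⬝ᵥ v :=
      by rw [dotProduct_comm]; rfl
    have n1 := inner_self_eq_norm_sq (𝕜 := ℂ) ((WithLp.equiv 2 (ι → ℂ)).symm (M *ᵥ v))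
    have n2 := inner_self_eq_norm_sq (𝕜 := ℂ) ((WithLp.equiv 2 (κ → ℂ)).symm v)
    rw [RCLike.re_to_complex] at n1 n2
    have hre : ‖(WithLp.equiv 2 (ι → ℂ)).symm (M *ᵥ v)‖ ^ 2
        + ‖(WithLp.equiv 2 (κ → ℂ)).symm v‖ ^ 2
        = Complex.re (star v ⬝ᵥ (P *ᵥ v)) := by
      rw [hdot v, Complex.add_re, ← e1, ← e2, n1, n2]
    rw [hre, ← hip]
    calc Complex.re (inner ℂ ((WithLp.equiv 2 (κ → ℂ)).symm v)
          ((WithLp.equiv 2 (κ → ℂ)).symm (P *ᵥ v)) : ℂ)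
        ≤ ‖(inner ℂ ((WithLp.equiv 2 (κ → ℂ)).symm v)
          ((WithLp.equiv 2 (κ → ℂ)).symm (P *ᵥ v)) : ℂ)‖ := Complex.re_le_norm _
      _ ≤ ‖(WithLp.equiv 2 (κ → ℂ)).symm v‖
            * ‖(WithLp.equiv 2 (κ → ℂ)).symm (P *ᵥ v)‖ := norm_inner_le_norm _ _
      _ ≤ ‖(WithLp.equiv 2 (κ → ℂ)).symm v‖
            * (‖P‖ * ‖(WithLp.equiv 2 (κ → ℂ)).symm v‖) := by
          refine mul_le_mul_of_nonneg_left ?_ (norm_nonneg _)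
          exact Matrix.l2_opNorm_mulVec P ((WithLp.equiv 2 (κ → ℂ)).symm v)
      _ = ‖P‖ * ‖(WithLp.equiv 2 (κ → ℂ)).symm v‖ ^ 2 := by ring
  -- ‖P‖ ≥ 1
  have hN1 : 1 ≤ ‖P‖ := by
    obtain ⟨i0⟩ := ‹Nonempty κ›
    have hv := h1 (Pi.single i0 1)
    have hn : ‖(WithLp.equiv 2 (κ → ℂ)).symm (Pi.single i0 1)‖ = 1 := by
      have : ((WithLp.equiv 2 (κ → ℂ)).symm (Pi.single i0 1))
          = EuclideanSpace.single i0 (1 : ℂ) := rfl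
      rw [this, EuclideanSpace.norm_single, norm_one]
    rw [hn] at hv
    nlinarith [sq_nonneg ‖(WithLp.equiv 2 (ι → ℂ)).symm (M *ᵥ Pi.single i0 1)‖]
  -- ‖1‖ = 1
  haveI : Nontrivial (Matrix κ κ ℂ) := Matrix.nonempty
  have hone : ‖(1 : Matrix κ κ ℂ)‖ = 1 := CStarRing.norm_one
  -- upper bound
  have hub : ‖P‖ ≤ ‖M‖ ^ 2 + 1 := by
    calc ‖P‖ ≤ ‖Mᴴ * M‖ + ‖(1 : Matrix κ κ ℂ)‖ := norm_add_le _ _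
      _ = ‖M‖ ^ 2 + 1 := by
          rw [Matrix.l2_opNorm_conjTranspose_mul_self, hone]; ring
  -- lower bound
  have hlb : ‖M‖ ^ 2 + 1 ≤ ‖P‖ := by
    have hM : ‖M‖ ≤ Real.sqrt (‖P‖ - 1) := by
      rw [Matrix.l2_opNorm_def]
      refine ContinuousLinearMap.opNorm_le_bound
        ((Matrix.toEuclideanLin (𝕜 := ℂ) (m := ι) (n := κ)).trans
          LinearMap.toContinuousLinearMap M) (Real.sqrt_nonneg _) ?_
      intro x
      rw [clm_apply]
      set v : κ → ℂ := (WithLp.equiv 2 (κ → ℂ)) x with hv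
      have hx : x = (WithLp.equiv 2 (κ → ℂ)).symm v := rfl
      have h2 := h1 v
      rw [← hx] at h2
      have h3 : ‖(WithLp.equiv 2 (ι → ℂ)).symm (M *ᵥ v)‖ ^ 2
          ≤ (‖P‖ - 1) * ‖x‖ ^ 2 := by nlinarith
      have h4 := Real.sqrt_le_sqrt h3
      rw [Real.sqrt_sq (norm_nonneg _), Real.sqrt_mul (by linarith) _,
        Real.sqrt_sq (norm_nonneg _)] at h4
      exact h4
    have := pow_le_pow_left₀ (norm_nonneg M) hM 2
    rw [Real.sq_sqrt (by linarith)] at this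
    linarith
  linarith

end helpers

/-- if the `m×m` matrix `F = [G ; H]` is unitary with row blocks `G` (`n×m`)
and `H` (`(m−n)×m`), then for every `n×(m−n)` matrix `M`,
`‖M†G − H‖₂² = 1 + ‖M‖₂²`. -/
theorem stmt_13 (m n q : ℕ) (hn : 1 ≤ n) (hm : n < m) (hq : q = m - n)
    (F : Matrix (Fin n ⊕ Fin q) (Fin m) ℂ)
    (hF1 : F * Fᴴ = 1) (hF2 : Fᴴ * F = 1)
    (M : Matrix (Fin n) (Fin q) ℂ) :
    specNorm (Mᴴ * F.submatrix Sum.inl id - F.submatrix Sum.inr id) ^ 2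
      = 1 + specNorm M ^ 2 := by
  have hq0 : 0 < q := by omega
  haveI : Nonempty (Fin q) := ⟨⟨0, hq0⟩⟩
  set G : Matrix (Fin n) (Fin m) ℂ := F.submatrix Sum.inl id with hG
  set H : Matrix (Fin q) (Fin m) ℂ := F.submatrix Sum.inr id with hH
  have key : ∀ a b, (F * Fᴴ) a b = (1 : Matrix (Fin n ⊕ Fin q) (Fin n ⊕ Fin q) ℂ) a b :=
    fun a b => by rw [hF1]
  have hGG : G * Gᴴ = 1 := by
    ext i j
    have := key (Sum.inl i) (Sum.inl j)
    simpa [mul_apply, conjTranspose_apply, hG, one_apply, Sum.inl.injEq] using this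
  have hGH : G * Hᴴ = 0 := by
    ext i j
    have := key (Sum.inl i) (Sum.inr j)
    simpa [mul_apply, conjTranspose_apply, hG, hH, one_apply] using this
  have hHG : H * Gᴴ = 0 := by
    ext i j
    have := key (Sum.inr i) (Sum.inl j)
    simpa [mul_apply, conjTranspose_apply, hG, hH, one_apply] using this
  have hHH : H * Hᴴ = 1 := by
    ext i j
    have := key (Sum.inr i) (Sum.inr j)
    simpa [mul_apply, conjTranspose_apply, hH, one_apply, Sum.inr.injEq] using this
  set A : Matrix (Fin q) (Fin m) ℂ := Mᴴ * G - H with hA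
  have hAA : A * Aᴴ = Mᴴ * M + 1 := by
    have hAH : Aᴴ = Gᴴ * M - Hᴴ := by
      rw [hA, conjTranspose_sub, conjTranspose_mul, conjTranspose_conjTranspose]
    rw [hA, hAH, Matrix.sub_mul, Matrix.mul_sub, Matrix.mul_sub]
    have e1 : Mᴴ * G * (Gᴴ * M) = Mᴴ * M := by
      rw [Matrix.mul_assoc, ← Matrix.mul_assoc G, hGG, Matrix.one_mul]
    have e2 : Mᴴ * G * Hᴴ = 0 := by rw [Matrix.mul_assoc, hGH, Matrix.mul_zero]
    have e3 : H * (Gᴴ * M) = 0 := by rw [← Matrix.mul_assoc, hHG, Matrix.zero_mul]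
    rw [e1, e2, e3, hHH]
    simp
  rw [specNorm_eq, specNorm_eq, norm_sq_eq, hAA, norm_one_add]
  ring

end
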